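/- arXiv:1211.4806 — 4 statements merged into one kernel-verified Lean document; each statement's English description precedes it below -/
import Mathlib

section
/- For positive integers m, n, m', n', the intersection of the subgroups (m/n)ℤ and (m'/n')ℤ of ℚ equals (lcm(m,m')/gcd(n,n'))ℤ. -/
/-- for positive integers `m, n, m', n'` with `gcd(m,n) = 1` and
`gcd(m',n') = 1`, the intersection of the subgroups `(m/n)ℤ` and `(m'/n')ℤ` of `ℚ`
equals `(lcm(m,m')/gcd(n,n'))ℤ`. -/
theorem stmt4 (m n m' n' : ℕ) (hm : 0 < m) (hn : 0 < n) (hm' : 0 < m') (hn' : 0 < n')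
    (h : Nat.Coprime m n) (h' : Nat.Coprime m' n') :
    AddSubgroup.zmultiples ((m : ℚ) / (n : ℚ)) ⊓ AddSubgroup.zmultiples ((m' : ℚ) / (n' : ℚ))
      = AddSubgroup.zmultiples ((Nat.lcm m m' : ℚ) / (Nat.gcd n n' : ℚ)) := by
  have hnQ : (n:ℚ) ≠ 0 := Nat.cast_ne_zero.mpr hn.ne'
  have hn'Q : (n':ℚ) ≠ 0 := Nat.cast_ne_zero.mpr hn'.ne'
  set g := Nat.gcd n n' with hgdef
  set L := Nat.lcm m m' with hLdef
  have hgpos : 0 < g := Nat.gcd_pos_of_pos_left _ hn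
  have hgQ : (g:ℚ) ≠ 0 := Nat.cast_ne_zero.mpr hgpos.ne'
  ext x
  simp only [AddSubgroup.mem_inf, AddSubgroup.mem_zmultiples_iff, zsmul_eq_mul]
  constructor
  · rintro ⟨⟨a, ha⟩, ⟨b, hb⟩⟩
    have ha' : (a:ℚ) * m = n * x := by field_simp at ha; linarith [ha]
    have hb' : (b:ℚ) * m' = n' * x := by field_simp at hb; linarith [hb]
    set A := Nat.gcdA n n' with hAdef
    set B := Nat.gcdB n n' with hBdef
    set c : ℤ := A * (a * m) + B * (b * m') with hcdef
    have hbez : (g:ℤ) = (n:ℤ) * A + (n':ℤ) * B := Nat.gcd_eq_gcd_ab n n'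
    have hc : (c:ℚ) = g * x := by
      have : (g:ℚ) = (n:ℚ) * (A:ℚ) + (n':ℚ) * (B:ℚ) := by exact_mod_cast hbez
      rw [this, hcdef]; push_cast
      calc ((A:ℚ) * (a * m) + B * (b * m'))
          = A * ((a:ℚ) * m) + B * ((b:ℚ) * m') := by ring
        _ = A * ((n:ℚ) * x) + B * ((n':ℚ) * x) := by rw [ha', hb']
        _ = ((n:ℚ) * A + (n':ℚ) * B) * x := by ring
    -- m ∣ c
    have key : ∀ (μ ν : ℕ) (k : ℤ), Nat.Coprime μ ν → g ∣ ν →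
        (k:ℚ) * μ = ν * x → (μ:ℤ) ∣ c := by
      intro μ ν k hco hgν hk
      obtain ⟨t, ht⟩ := hgν
      have htν : (t:ℕ) ∣ ν := ⟨g, by rw [ht]; ring⟩
      have hct : c * t = k * μ := by
        have : (c:ℚ) * t = (k:ℚ) * μ := by
          rw [hc, hk]
          have : (ν:ℚ) = g * t := by exact_mod_cast ht
          rw [this]; ring
        exact_mod_cast this
      have hcop : IsCoprime (μ:ℤ) (t:ℤ) :=
        Nat.isCoprime_iff_coprime.mpr (hco.coprime_dvd_right htν)
      exact hcop.dvd_of_dvd_mul_right ⟨k, by linarith [hct]⟩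
    have hmc : (m:ℤ) ∣ c := key m n a h (Nat.gcd_dvd_left n n') ha'
    have hm'c : (m':ℤ) ∣ c := key m' n' b h' (Nat.gcd_dvd_right n n') hb'
    have hLc : (L:ℤ) ∣ c := by
      have := Int.coe_lcm_dvd hmc hm'c
      have hl : Int.lcm (m:ℤ) (m':ℤ) = L := by
        simp [Int.lcm, hLdef]
      rwa [hl] at this
    obtain ⟨j, hj⟩ := hLc
    refine ⟨j, ?_⟩
    have : (j:ℚ) * L = g * x := by
      rw [← hc, hj]; push_cast; ring
    field_simp
    linarith [this]
  · rintro ⟨k, hk⟩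
    have hk' : (k:ℚ) * L = g * x := by
      field_simp at hk; linarith [hk]
    have mem : ∀ (μ ν : ℕ), 0 < μ → (ν:ℚ) ≠ 0 → μ ∣ L → g ∣ ν →
        ∃ j : ℤ, (j:ℚ) * ((μ:ℚ) / ν) = x := by
      intro μ ν hμ hνQ hμL hgν
      obtain ⟨u, hu⟩ := hμL
      obtain ⟨v, hv⟩ := hgν
      refine ⟨k * u * v, ?_⟩
      have hLQ : (L:ℚ) = μ * u := by exact_mod_cast hu
      have hνQ' : (ν:ℚ) = g * v := by exact_mod_cast hv
      field_simp
      rw [hνQ']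
      push_cast
      calc (k:ℚ) * u * v * μ = ((k:ℚ) * ((μ:ℚ) * u)) * v := by ring
        _ = ((k:ℚ) * L) * v := by rw [hLQ]
        _ = (g:ℚ) * v * x := by rw [hk']; ring
    exact ⟨mem m n hm hnQ (Nat.dvd_lcm_left _ _) (Nat.gcd_dvd_left _ _),
      mem m' n' hm' hn'Q (Nat.dvd_lcm_right _ _) (Nat.gcd_dvd_right _ _)⟩
end

section
/- If s_1, s_2 are positive integers, s = s_1 s_2, and the map U ↦ sU is a well-defined bijection of 𝒰 onto itself, then the maps U ↦ s_1 U and U ↦ s_2 U are also well-defined bijections of 𝒰 onto itself. -/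
/-- `a_{-1} a_{-2} ⋯ a_{-k}`. -/
def prodNeg (a : ℤ → ℤ) (k : ℕ) : ℤ := ∏ i ∈ Finset.range k, a (-(i : ℤ) - 1)

/-- `a_0 a_1 ⋯ a_{j-1}`. -/
def prodPos (a : ℤ → ℤ) (j : ℕ) : ℤ := ∏ i ∈ Finset.range j, a (i : ℤ)

/-- The family `𝒰` of subgroups `(m/n)ℤ` of `ℚ`, where `m` divides `a_0⋯a_j` for some
`j ≥ 0` and `n` divides `a_{-1}⋯a_{-k}` for some `k ≥ 1`. -/
def Ufam (a : ℤ → ℤ) : Set (AddSubgroup ℚ) :=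
  {U | ∃ m n : ℕ, 0 < m ∧ 0 < n ∧ (∃ j : ℕ, (m : ℤ) ∣ prodPos a (j + 1)) ∧
    (∃ k : ℕ, 1 ≤ k ∧ (n : ℤ) ∣ prodNeg a k) ∧
    U = AddSubgroup.zmultiples ((m : ℚ) / (n : ℚ))}


/-- Multiplication of a subgroup of `ℚ` by a rational number `s`: the image `sU`. -/
def smulSub (s : ℚ) (U : AddSubgroup ℚ) : AddSubgroup ℚ :=
  U.map (DistribMulAction.toAddMonoidHom ℚ s)

lemma smulSub_zmultiples (s q : ℚ) :
    smulSub s (AddSubgroup.zmultiples q) = AddSubgroup.zmultiples (s * q) := by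
  unfold smulSub
  rw [AddMonoidHom.map_zmultiples]
  rfl

lemma smulSub_smulSub (s t : ℚ) (U : AddSubgroup ℚ) :
    smulSub s (smulSub t U) = smulSub (s * t) U := by
  unfold smulSub
  rw [AddSubgroup.map_map]
  congr 1
  ext x
  simp [mul_assoc]

lemma smulSub_one (U : AddSubgroup ℚ) : smulSub 1 U = U := by
  unfold smulSub
  ext x
  simp

lemma zmultiples_pos_inj {q q' : ℚ} (hq : 0 < q) (hq' : 0 < q')
    (h : AddSubgroup.zmultiples q = AddSubgroup.zmultiples q') : q = q' := by
  have h1 : q ∈ AddSubgroup.zmultiples q' := h ▸ AddSubgroup.mem_zmultiples q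
  have h2 : q' ∈ AddSubgroup.zmultiples q := h.symm ▸ AddSubgroup.mem_zmultiples q'
  rw [AddSubgroup.mem_zmultiples_iff] at h1 h2
  obtain ⟨z, hz⟩ := h1
  obtain ⟨w, hw⟩ := h2
  simp only [zsmul_eq_mul] at hz hw
  have hzw : ((z * w : ℤ) : ℚ) * q = q := by push_cast; nlinarith [hz, hw]
  have h1 : ((z * w : ℤ) : ℚ) = 1 :=
    mul_right_cancel₀ (ne_of_gt hq) (by rw [hzw, one_mul])
  have h2 : (z * w : ℤ) = 1 := by exact_mod_cast h1
  rcases Int.mul_eq_one_iff_eq_one_or_neg_one.mp h2 with ⟨_, hw1⟩ | ⟨_, hw1⟩ <;>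
    rw [hw1] at hw <;> push_cast at hw <;> linarith

lemma num_grow (a : ℤ → ℤ) (s : ℕ) (hs : 0 < s)
    (hbij : Set.BijOn (fun U => smulSub (s : ℚ) U) (Ufam a) (Ufam a))
    (m : ℕ) (hm : 0 < m) (hmd : ∃ j, (m : ℤ) ∣ prodPos a (j + 1)) :
    ∃ j, ((s * m : ℕ) : ℤ) ∣ prodPos a (j + 1) := by
  have hU : AddSubgroup.zmultiples ((m : ℚ) / ((1 : ℕ) : ℚ)) ∈ Ufam a :=
    ⟨m, 1, hm, one_pos, hmd, ⟨1, le_refl 1, one_dvd _⟩, rfl⟩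
  obtain ⟨m', n', hm', hn', ⟨j, hj⟩, _, hEq⟩ := hbij.mapsTo hU
  simp only at hEq
  rw [smulSub_zmultiples] at hEq
  have hmq : (0:ℚ) < (s:ℚ) * ((m : ℚ) / ((1 : ℕ) : ℚ)) := by
    push_cast; positivity
  have hmq' : (0:ℚ) < (m' : ℚ) / (n' : ℚ) := by positivity
  have hq := zmultiples_pos_inj hmq hmq' hEq
  have hn'0 : ((n':ℕ):ℚ) ≠ 0 := by positivity
  have key : (m' : ℚ) = (s : ℚ) * m * n' := by
    field_simp at hq
    push_cast at hq; linarith [hq]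
  have keyN : m' = s * m * n' := by exact_mod_cast key
  refine ⟨j, dvd_trans ⟨(n' : ℤ), ?_⟩ hj⟩
  push_cast [keyN]; ring

lemma den_grow (a : ℤ → ℤ) (s : ℕ) (hs : 0 < s)
    (hbij : Set.BijOn (fun U => smulSub (s : ℚ) U) (Ufam a) (Ufam a))
    (n : ℕ) (hn : 0 < n) (hnd : ∃ k, 1 ≤ k ∧ (n : ℤ) ∣ prodNeg a k) :
    ∃ k, 1 ≤ k ∧ ((s * n : ℕ) : ℤ) ∣ prodNeg a k := by
  have hU : AddSubgroup.zmultiples (((1:ℕ) : ℚ) / ((n : ℕ) : ℚ)) ∈ Ufam a :=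
    ⟨1, n, one_pos, hn, ⟨0, one_dvd _⟩, hnd, rfl⟩
  obtain ⟨V, hV, hVU⟩ := hbij.surjOn hU
  obtain ⟨m', n', hm', hn', _, ⟨k, hk1, hk2⟩, rfl⟩ := hV
  simp only at hVU
  rw [smulSub_zmultiples] at hVU
  have hmq : (0:ℚ) < (s:ℚ) * ((m' : ℚ) / (n' : ℚ)) := by positivity
  have hmq' : (0:ℚ) < ((1:ℕ) : ℚ) / ((n : ℕ) : ℚ) := by positivity
  have hq := zmultiples_pos_inj hmq hmq' hVU
  have key : (n' : ℚ) = (s : ℚ) * m' * n := by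
    have hn'0 : ((n':ℕ):ℚ) ≠ 0 := by positivity
    have hn0 : ((n:ℕ):ℚ) ≠ 0 := by positivity
    field_simp at hq
    push_cast at hq; linarith [hq]
  have keyN : n' = s * m' * n := by exact_mod_cast key
  refine ⟨k, hk1, dvd_trans ⟨(m' : ℤ), ?_⟩ hk2⟩
  push_cast [keyN]; ring

lemma key_lemma (a : ℤ → ℤ) (s t u : ℕ) (hstu : s = t * u) (ht : 0 < t) (hu : 0 < u)
    (hbij : Set.BijOn (fun U => smulSub (s : ℚ) U) (Ufam a) (Ufam a)) :
    Set.BijOn (fun U => smulSub (t : ℚ) U) (Ufam a) (Ufam a) := by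
  have hs : 0 < s := hstu ▸ Nat.mul_pos ht hu
  have ht0 : ((t:ℕ):ℚ) ≠ 0 := by positivity
  refine ⟨?_, ?_, ?_⟩
  · -- MapsTo
    rintro U ⟨m, n, hm, hn, hjd, hkd, rfl⟩
    obtain ⟨j', hj'⟩ := num_grow a s hs hbij m hm hjd
    obtain ⟨k', hk'1, hk'2⟩ := den_grow a s hs hbij n hn hkd
    refine ⟨s * m, u * n, Nat.mul_pos hs hm, Nat.mul_pos hu hn, ⟨j', hj'⟩,
      ⟨k', hk'1, dvd_trans ⟨(t : ℤ), ?_⟩ hk'2⟩, ?_⟩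
    · push_cast [hstu]; ring
    · simp only
      rw [smulSub_zmultiples]
      congr 1
      have hn0 : ((n:ℕ):ℚ) ≠ 0 := by positivity
      have hu0 : ((u:ℕ):ℚ) ≠ 0 := by positivity
      push_cast [hstu]
      field_simp
  · -- InjOn
    intro U _ V _ h
    simp only at h
    have h2 : smulSub ((t:ℚ))⁻¹ (smulSub (t:ℚ) U) = smulSub ((t:ℚ))⁻¹ (smulSub (t:ℚ) V) := by
      rw [h]
    rwa [smulSub_smulSub, smulSub_smulSub, inv_mul_cancel₀ ht0, smulSub_one, smulSub_one] at h2
  · -- SurjOn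
    rintro U ⟨m, n, hm, hn, hjd, hkd, rfl⟩
    obtain ⟨j', hj'⟩ := num_grow a s hs hbij m hm hjd
    obtain ⟨k', hk'1, hk'2⟩ := den_grow a s hs hbij n hn hkd
    refine ⟨AddSubgroup.zmultiples (((u * m : ℕ) : ℚ) / ((s * n : ℕ) : ℚ)),
      ⟨u * m, s * n, Nat.mul_pos hu hm, Nat.mul_pos hs hn,
        ⟨j', dvd_trans ⟨(t : ℤ), ?_⟩ hj'⟩, ⟨k', hk'1, hk'2⟩, rfl⟩, ?_⟩
    · push_cast [hstu]; ring
    · simp only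
      rw [smulSub_zmultiples]
      congr 1
      have hn0 : ((n:ℕ):ℚ) ≠ 0 := by positivity
      have hs0 : ((s:ℕ):ℚ) ≠ 0 := by positivity
      push_cast [hstu]
      field_simp


/-- if `s = s₁s₂` with `s₁, s₂` positive integers and `U ↦ sU` is a
well-defined bijection of `𝒰` onto itself, then so are `U ↦ s₁U` and `U ↦ s₂U`. -/
theorem stmt6 (a : ℤ → ℤ) (ha : ∀ i, 2 ≤ a i) (s₁ s₂ : ℕ) (hs₁ : 0 < s₁) (hs₂ : 0 < s₂)
    (hbij : Set.BijOn (fun U => smulSub ((s₁ * s₂ : ℕ) : ℚ) U) (Ufam a) (Ufam a)) :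
    Set.BijOn (fun U => smulSub ((s₁ : ℕ) : ℚ) U) (Ufam a) (Ufam a) ∧
    Set.BijOn (fun U => smulSub ((s₂ : ℕ) : ℚ) U) (Ufam a) (Ufam a) := by
  exact ⟨key_lemma a (s₁ * s₂) s₁ s₂ rfl hs₁ hs₂ hbij,
    key_lemma a (s₁ * s₂) s₂ s₁ (Nat.mul_comm s₁ s₂) hs₂ hs₁ hbij⟩
end

section
/- For x ∈ Ω and y ∈ Ω*, the sequence z_j = exp(2πi x^{(j)} y^{(j)} / a_0) is eventually constant, where x^{(j)} and y^{(j)} denote the j-th truncations (finite partial sums) of x and y. -/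
/-- The reflected sequence `a*`, with `a*_i = a_{-i}`. -/
def astar (a : ℤ → ℤ) : ℤ → ℤ := fun i => a (-i)

/-- The weight of the digit in position `i` of an `a`-adic number:
`a_0⋯a_{i-1}` for `i ≥ 0`, and `1/(a_{-1}⋯a_i)` for `i < 0`. -/
def weight (a : ℤ → ℤ) (i : ℤ) : ℚ :=
  if 0 ≤ i then ((prodPos a i.toNat : ℤ) : ℚ) else (((prodNeg a (-i).toNat : ℤ) : ℚ))⁻¹

/-- The `j`-th truncation `x^{(j)} ∈ ℚ` of an `a`-adic number given by its digit
sequence `x : ℤ → ℤ` (a finite sum since the digits vanish below some index). -/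
noncomputable def trunc (a : ℤ → ℤ) (x : ℤ → ℤ) (j : ℕ) : ℚ :=
  ∑ᶠ i : ℤ, if i ≤ (j : ℤ) then (x i : ℚ) * weight a i else 0

lemma prodNeg_pos {a : ℤ → ℤ} (ha : ∀ i, 2 ≤ a i) (k : ℕ) : 0 < prodNeg a k :=
  Finset.prod_pos fun i _ => lt_of_lt_of_le two_pos (ha _)

lemma prodNeg_dvd (a : ℤ → ℤ) {k M : ℕ} (h : k ≤ M) : prodNeg a k ∣ prodNeg a M :=
  Finset.prod_dvd_prod_of_subset _ _ _ (Finset.range_subset_range.mpr h)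

lemma weight_int {a : ℤ → ℤ} (ha : ∀ i, 2 ≤ a i) (M : ℕ) (i : ℤ) (hi : -(M:ℤ) ≤ i) :
    ∃ n : ℤ, ((prodNeg a M : ℤ) : ℚ) * weight a i = n := by
  unfold weight
  by_cases h : 0 ≤ i
  · exact ⟨prodNeg a M * prodPos a i.toNat, by rw [if_pos h]; push_cast; ring⟩
  · rw [if_neg h]
    have hk : (-i).toNat ≤ M := by omega
    obtain ⟨c, hc⟩ := prodNeg_dvd a hk
    have hne : ((prodNeg a (-i).toNat : ℤ) : ℚ) ≠ 0 := by
      have := prodNeg_pos ha (-i).toNat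
      exact_mod_cast this.ne'
    refine ⟨c, ?_⟩
    rw [hc]
    push_cast
    field_simp

lemma trunc_eq_sum (a z : ℤ → ℤ) (M : ℕ) (hz : ∀ i < -(M:ℤ), z i = 0) (j : ℕ) :
    trunc a z j = ∑ i ∈ Finset.Icc (-(M:ℤ)) (j:ℤ), (z i : ℚ) * weight a i := by
  unfold trunc
  rw [finsum_eq_finset_sum_of_support_subset _ (s := Finset.Icc (-(M:ℤ)) (j:ℤ)) ?_]
  · exact Finset.sum_congr rfl fun i hi => if_pos (Finset.mem_Icc.mp hi).2
  · intro i hi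
    simp only [Function.mem_support, ne_eq] at hi
    have h1 : i ≤ (j:ℤ) := by
      by_contra h; exact hi (if_neg h)
    have h2 : -(M:ℤ) ≤ i := by
      by_contra h
      apply hi
      rw [if_pos h1, hz i (by omega)]
      simp
    simpa [Finset.mem_Icc] using ⟨h2, h1⟩

lemma trunc_succ (a z : ℤ → ℤ) (M : ℕ) (hz : ∀ i < -(M:ℤ), z i = 0) (j : ℕ) :
    trunc a z (j+1) = trunc a z j + (z ((j:ℤ)+1) : ℚ) * weight a ((j:ℤ)+1) := by
  rw [trunc_eq_sum a z M hz, trunc_eq_sum a z M hz]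
  have hIcc : Finset.Icc (-(M:ℤ)) ((j+1:ℕ):ℤ) = insert ((j:ℤ)+1) (Finset.Icc (-(M:ℤ)) (j:ℤ)) := by
    ext i; simp only [Finset.mem_Icc, Finset.mem_insert]; omega
  rw [hIcc, Finset.sum_insert (by simp [Finset.mem_Icc])]
  ring

lemma trunc_int {a : ℤ → ℤ} (ha : ∀ i, 2 ≤ a i) (z : ℤ → ℤ) (M : ℕ)
    (hz : ∀ i < -(M:ℤ), z i = 0) (j : ℕ) :
    ∃ n : ℤ, ((prodNeg a M : ℤ) : ℚ) * trunc a z j = n := by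
  rw [trunc_eq_sum a z M hz j, Finset.mul_sum]
  have h : (∑ i ∈ Finset.Icc (-(M:ℤ)) (j:ℤ), ((prodNeg a M : ℤ):ℚ) * ((z i:ℚ) * weight a i))
      ∈ (⊥ : Subring ℚ) := by
    apply Subring.sum_mem
    intro i hi
    obtain ⟨n, hn⟩ := weight_int ha M i (Finset.mem_Icc.mp hi).1
    have he : ((prodNeg a M:ℤ):ℚ) * ((z i:ℚ) * weight a i) = ((z i * n : ℤ) : ℚ) := by
      push_cast
      rw [mul_comm ((z i : ℚ))]
      rw [← mul_assoc, hn]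
      ring
    rw [he]
    exact intCast_mem _ _
  obtain ⟨n, hn⟩ := Subring.mem_bot.mp h
  exact ⟨n, hn.symm⟩

lemma weight_natCast (a : ℤ → ℤ) (j : ℕ) :
    weight a ((j:ℤ)+1) = ((prodPos a (j+1) : ℤ) : ℚ) := by
  unfold weight
  rw [if_pos (by omega)]
  have h : ((j:ℤ)+1).toNat = j+1 := by omega
  rw [h]

lemma prodPos_succ_eq (a : ℤ → ℤ) (j : ℕ) : prodPos a (j+1) = a 0 * prodNeg (astar a) j := by
  unfold prodPos prodNeg astar
  rw [Finset.prod_range_succ']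
  rw [mul_comm]
  congr 1
  exact Finset.prod_congr rfl fun i _ => by congr 1; push_cast; ring

lemma prodPos_astar_succ (a : ℤ → ℤ) (j : ℕ) :
    prodPos (astar a) (j+1) = a 0 * prodNeg a j := by
  unfold prodPos prodNeg astar
  rw [Finset.prod_range_succ']
  rw [mul_comm]
  congr 1
  exact Finset.prod_congr rfl fun i _ => by congr 1; push_cast; ring

lemma key_step (a : ℤ → ℤ) (ha : ∀ i, 2 ≤ a i) (x y : ℤ → ℤ) (M M' : ℕ)
    (hxz : ∀ i < -(M:ℤ), x i = 0) (hyz : ∀ i < -(M':ℤ), y i = 0)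
    (j : ℕ) (hjM : M ≤ j) (hjM' : M' ≤ j) :
    ∃ n : ℤ, trunc a x (j+1) * trunc (astar a) y (j+1) / ((a 0 : ℤ) : ℚ)
      = trunc a x j * trunc (astar a) y j / ((a 0 : ℤ) : ℚ) + n := by
  have ha' : ∀ i, 2 ≤ astar a i := fun i => ha (-i)
  obtain ⟨nX, hnX⟩ := trunc_int ha x M hxz j
  obtain ⟨nY, hnY⟩ := trunc_int ha' y M' hyz j
  obtain ⟨c, hc⟩ := prodNeg_dvd a hjM
  obtain ⟨c', hc'⟩ := prodNeg_dvd (astar a) hjM'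
  have hA0 : ((a 0 : ℤ) : ℚ) ≠ 0 := by
    have : (0:ℤ) < a 0 := by linarith [ha 0]
    exact_mod_cast this.ne'
  refine ⟨nX * c * y ((j:ℤ)+1) + x ((j:ℤ)+1) * c' * nY
      + x ((j:ℤ)+1) * y ((j:ℤ)+1) * a 0 * prodNeg a j * prodNeg (astar a) j, ?_⟩
  rw [trunc_succ a x M hxz j, trunc_succ (astar a) y M' hyz j,
      weight_natCast a j, weight_natCast (astar a) j,
      prodPos_succ_eq a j, prodPos_astar_succ a j]
  have e1 : (trunc a x j) * ((prodNeg a j : ℤ) : ℚ) = (nX : ℚ) * c := by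
    rw [hc]; push_cast
    linear_combination (c:ℚ) * hnX
  have e2 : (trunc (astar a) y j) * ((prodNeg (astar a) j : ℤ) : ℚ) = (nY : ℚ) * c' := by
    rw [hc']; push_cast
    linear_combination (c':ℚ) * hnY
  field_simp
  push_cast
  linear_combination (((a 0 : ℤ):ℚ) * (y ((j:ℤ)+1))) * e1 + (((a 0 : ℤ):ℚ) * (x ((j:ℤ)+1))) * e2

/-- for `x ∈ Ω` and `y ∈ Ω*` (given by digit sequences with a first
nonzero entry), the sequence `z_j = exp(2πi x^{(j)} y^{(j)} / a_0)` is eventually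
constant. -/
theorem stmt10 (a : ℤ → ℤ) (ha : ∀ i, 2 ≤ a i)
    (x y : ℤ → ℤ)
    (hx : ∀ i, 0 ≤ x i ∧ x i < a i) (hxlow : ∃ m : ℤ, ∀ i < m, x i = 0)
    (hy : ∀ i, 0 ≤ y i ∧ y i < astar a i) (hylow : ∃ m : ℤ, ∀ i < m, y i = 0) :
    ∃ J : ℕ, ∀ j ≥ J,
      Complex.exp (2 * Real.pi * Complex.I *
        ((trunc a x j : ℚ) * (trunc (astar a) y j : ℚ) / ((a 0 : ℤ) : ℚ) : ℚ))
      = Complex.exp (2 * Real.pi * Complex.I *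
        ((trunc a x J : ℚ) * (trunc (astar a) y J : ℚ) / ((a 0 : ℤ) : ℚ) : ℚ)) := by
  obtain ⟨m0, hm0⟩ := hxlow
  obtain ⟨m1, hm1⟩ := hylow
  set M : ℕ := m0.natAbs with hM
  set M' : ℕ := m1.natAbs with hM'
  have hxz : ∀ i < -(M:ℤ), x i = 0 := fun i hi => hm0 i (by omega)
  have hyz : ∀ i < -(M':ℤ), y i = 0 := fun i hi => hm1 i (by omega)
  set J : ℕ := max M M' with hJ
  refine ⟨J, ?_⟩
  have tel : ∀ j : ℕ, J ≤ j → ∃ n : ℤ,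
      trunc a x j * trunc (astar a) y j / ((a 0 : ℤ) : ℚ)
      = trunc a x J * trunc (astar a) y J / ((a 0 : ℤ) : ℚ) + n := by
    intro j hj
    induction j, hj using Nat.le_induction with
    | base => exact ⟨0, by simp⟩
    | succ k hk ih =>
      obtain ⟨n, hn⟩ := ih
      obtain ⟨n', hn'⟩ := key_step a ha x y M M' hxz hyz k
        (le_trans (le_max_left _ _) hk) (le_trans (le_max_right _ _) hk)
      exact ⟨n + n', by rw [hn', hn]; push_cast; ring⟩
  intro j hj
  obtain ⟨n, hn⟩ := tel j hj
  have hcast : (2 * Real.pi * Complex.I *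
        ((trunc a x j : ℚ) * (trunc (astar a) y j : ℚ) / ((a 0 : ℤ) : ℚ) : ℚ))
      = (2 * Real.pi * Complex.I *
        ((trunc a x J : ℚ) * (trunc (astar a) y J : ℚ) / ((a 0 : ℤ) : ℚ) : ℚ))
        + (n : ℂ) * (2 * Real.pi * Complex.I) := by
    have : ((trunc a x j * trunc (astar a) y j / ((a 0 : ℤ) : ℚ) : ℚ) : ℂ)
        = ((trunc a x J * trunc (astar a) y J / ((a 0 : ℤ) : ℚ) : ℚ) : ℂ) + (n : ℂ) := by
      exact_mod_cast congrArg (Rat.cast : ℚ → ℂ) hn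
    push_cast at this ⊢
    rw [this]
    ring
  rw [hcast, Complex.exp_add, Complex.exp_int_mul_two_pi_mul_I, mul_one]
end

section
/- If Ω_a ≅ Ω_b as topological groups, then for every prime p, λ_a(p) + ρ_a(p) = λ_b(p) + ρ_b(p), where the sum is taken in ℕ ∪ {∞}. Consequently the sets of primes S_a and S_b coincide. -/
/-- `λ_a(p) = sup{ i : p^i ∣ a_0⋯a_j for some j ≥ 0 }`. -/
noncomputable def lamSN (a : ℤ → ℤ) (p : ℕ) : ℕ∞ :=
  ⨆ (n : ℕ) (_ : ∃ j : ℕ, (p : ℤ) ^ n ∣ prodPos a (j + 1)), (n : ℕ∞)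

/-- `ρ_a(p) = sup{ i : p^i ∣ a_{-1}⋯a_{-k} for some k ≥ 1 }`. -/
noncomputable def rhoSN (a : ℤ → ℤ) (p : ℕ) : ℕ∞ :=
  ⨆ (n : ℕ) (_ : ∃ k : ℕ, 1 ≤ k ∧ (p : ℤ) ^ n ∣ prodNeg a k), (n : ℕ∞)

/-- Multiplication of a supernatural number by a positive integer `r` adds `v_p(r)`
at each prime `p`. -/
noncomputable def mulSuper (r : ℕ) (l : ℕ → ℕ∞) (p : ℕ) : ℕ∞ :=
  l p + (padicValNat p r : ℕ∞)

/-- if `Ω_a ≅ Ω_b` as topological groups — equivalently, by the assumed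
classification theorem, if there are positive integers `p, q` with `pλ_a = qλ_b` and
`qρ_a = pρ_b` — then `λ_a(p) + ρ_a(p) = λ_b(p) + ρ_b(p)` for every prime `p` (sum in
`ℕ∪{∞}`), and consequently the subgroups `S_a = S_b` of `ℚ₊ˣ` generated by the primes
with `λ = ρ = ∞` coincide. -/
theorem stmt18 (a b : ℤ → ℤ) (ha : ∀ i, 2 ≤ a i) (hb : ∀ i, 2 ≤ b i)
    (hiso : ∃ p q : ℕ, 0 < p ∧ 0 < q ∧
      mulSuper p (lamSN a) = mulSuper q (lamSN b) ∧
      mulSuper q (rhoSN a) = mulSuper p (rhoSN b)) :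
    (∀ p : ℕ, p.Prime → lamSN a p + rhoSN a p = lamSN b p + rhoSN b p) ∧
    Subgroup.closure {u : ℚˣ | ∃ p : ℕ, p.Prime ∧ (u : ℚ) = (p : ℚ) ∧
        lamSN a p = ⊤ ∧ rhoSN a p = ⊤}
      = Subgroup.closure {u : ℚˣ | ∃ p : ℕ, p.Prime ∧ (u : ℚ) = (p : ℚ) ∧
        lamSN b p = ⊤ ∧ rhoSN b p = ⊤} := by
  obtain ⟨p, q, hp, hq, hl, hr⟩ := hiso
  -- pointwise equations at each prime r
  have key : ∀ r : ℕ,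
      lamSN a r + (padicValNat r p : ℕ∞) = lamSN b r + (padicValNat r q : ℕ∞) ∧
      rhoSN a r + (padicValNat r q : ℕ∞) = rhoSN b r + (padicValNat r p : ℕ∞) := by
    intro r
    exact ⟨congrFun hl r, congrFun hr r⟩
  have htopl : ∀ r : ℕ, (lamSN a r = ⊤ ↔ lamSN b r = ⊤) := by
    intro r
    obtain ⟨h1, _⟩ := key r
    constructor <;> intro h
    · by_contra hb'
      rw [h, top_add] at h1
      exact (WithTop.add_ne_top.2 ⟨hb', WithTop.natCast_ne_top _⟩) h1.symm
    · by_contra ha'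
      rw [h, top_add] at h1
      exact (WithTop.add_ne_top.2 ⟨ha', WithTop.natCast_ne_top _⟩) h1
  have htopr : ∀ r : ℕ, (rhoSN a r = ⊤ ↔ rhoSN b r = ⊤) := by
    intro r
    obtain ⟨_, h2⟩ := key r
    constructor <;> intro h
    · by_contra hb'
      rw [h, top_add] at h2
      exact (WithTop.add_ne_top.2 ⟨hb', WithTop.natCast_ne_top _⟩) h2.symm
    · by_contra ha'
      rw [h, top_add] at h2
      exact (WithTop.add_ne_top.2 ⟨ha', WithTop.natCast_ne_top _⟩) h2
  constructor
  · intro r _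
    obtain ⟨h1, h2⟩ := key r
    have h3 : (lamSN a r + rhoSN a r) + ((padicValNat r p : ℕ∞) + (padicValNat r q : ℕ∞))
        = (lamSN b r + rhoSN b r) + ((padicValNat r p : ℕ∞) + (padicValNat r q : ℕ∞)) := by
      calc (lamSN a r + rhoSN a r) + ((padicValNat r p : ℕ∞) + (padicValNat r q : ℕ∞))
          = (lamSN a r + (padicValNat r p : ℕ∞)) + (rhoSN a r + (padicValNat r q : ℕ∞)) := by
            rw [add_add_add_comm]
        _ = (lamSN b r + (padicValNat r q : ℕ∞)) + (rhoSN b r + (padicValNat r p : ℕ∞)) := by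
            rw [h1, h2]
        _ = (lamSN b r + rhoSN b r) + ((padicValNat r p : ℕ∞) + (padicValNat r q : ℕ∞)) := by
            rw [add_add_add_comm, add_comm (padicValNat r q : ℕ∞)]
    exact WithTop.add_right_cancel
      (WithTop.add_ne_top.2 ⟨WithTop.natCast_ne_top _, WithTop.natCast_ne_top _⟩) h3
  · congr 1
    ext u
    constructor
    · rintro ⟨r, hr', hu, hla, hra⟩
      exact ⟨r, hr', hu, (htopl r).1 hla, (htopr r).1 hra⟩
    · rintro ⟨r, hr', hu, hlb, hrb⟩
      exact ⟨r, hr', hu, (htopl r).2 hlb, (htopr r).2 hrb⟩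
end
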